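/- Let A be a real symmetric positive semidefinite d×d matrix with eigenvalues λ₁ ≥ ⋯ ≥ λ_d ≥ 0 and rank(A) ≤ m, and let λ > 0. Then ‖(A − λI_d)⁺₍ₘ₎ − A‖_F² = Σ_{i=1}^{d} min(λ_i, λ)². -/

import Mathlib

open Matrix

/-- Frobenius norm of a real matrix. -/
noncomputable def frobNorm {n m : ℕ} (M : Matrix (Fin n) (Fin m) ℝ) : ℝ :=
  Real.sqrt (∑ i, ∑ j, (M i j) ^ 2)

lemma frob_sq_conj (d : ℕ) (U : Matrix (Fin d) (Fin d) ℝ) (hU : Uᵀ * U = 1)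
    (δ : Fin d → ℝ) :
    frobNorm (U * Matrix.diagonal δ * Uᵀ) ^ 2 = ∑ i, δ i ^ 2 := by
  set M := U * Matrix.diagonal δ * Uᵀ with hM
  have hMt : Mᵀ = M := by
    simp [hM, Matrix.transpose_mul, Matrix.mul_assoc]
  have hMM : Mᵀ * M = U * Matrix.diagonal (fun i => δ i ^ 2) * Uᵀ := by
    rw [hMt, hM]
    have : (U * Matrix.diagonal δ * Uᵀ) * (U * Matrix.diagonal δ * Uᵀ)
        = U * (Matrix.diagonal δ * ((Uᵀ * U) * Matrix.diagonal δ)) * Uᵀ := by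
      simp only [Matrix.mul_assoc]
    rw [this, hU, Matrix.one_mul, Matrix.diagonal_mul_diagonal]
    congr 1
    ext i
    ring_nf
  have htr : (Mᵀ * M).trace = ∑ i, ∑ j, (M i j) ^ 2 := by
    rw [Matrix.trace]
    simp only [Matrix.diag, Matrix.mul_apply, Matrix.transpose_apply, sq]
    exact Finset.sum_comm
  have htr2 : (Mᵀ * M).trace = ∑ i, δ i ^ 2 := by
    rw [hMM, Matrix.trace_mul_cycle, hU, Matrix.one_mul, Matrix.trace_diagonal]
  have hs : (∑ i, ∑ j, (M i j) ^ 2) = ∑ i, δ i ^ 2 := by rw [← htr, htr2]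
  rw [frobNorm, Real.sq_sqrt (by positivity), hs]

lemma lam_tail_zero (d m : ℕ) (U : Matrix (Fin d) (Fin d) ℝ) (lam : Fin d → ℝ)
    (hU : Uᵀ * U = 1) (hlam : Antitone lam) (hlam0 : ∀ i, 0 ≤ lam i)
    (hrank : (U * Matrix.diagonal lam * Uᵀ).rank ≤ m) :
    ∀ i : Fin d, m ≤ (i : ℕ) → lam i = 0 := by
  have hdetU : IsUnit U.det := by
    have h1 : U.det * U.det = 1 := by
      have := congrArg Matrix.det hU
      simpa [Matrix.det_mul, Matrix.det_transpose, mul_comm] using this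
    exact IsUnit.of_mul_eq_one _ h1
  have hdetUt : IsUnit Uᵀ.det := by rwa [Matrix.det_transpose]
  have hr : (Matrix.diagonal lam).rank ≤ m := by
    rwa [Matrix.rank_mul_eq_left_of_isUnit_det _ _ hdetUt,
      Matrix.rank_mul_eq_right_of_isUnit_det _ _ hdetU] at hrank
  rw [Matrix.rank_diagonal] at hr
  intro i hi
  by_contra hne
  have hpos : 0 < lam i := lt_of_le_of_ne (hlam0 i) (Ne.symm hne)
  have hsub : (Finset.Iic i) ⊆ Finset.univ.filter (fun j => lam j ≠ 0) := by
    intro j hj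
    simp only [Finset.mem_filter, Finset.mem_univ, true_and]
    have : lam i ≤ lam j := hlam (Finset.mem_Iic.mp hj)
    exact ne_of_gt (lt_of_lt_of_le hpos this)
  have hcard : (i : ℕ) + 1 ≤ (Finset.univ.filter (fun j => lam j ≠ 0)).card := by
    calc (i : ℕ) + 1 = (Finset.Iic i).card := by simp [Nat.card_Iic]
    _ ≤ _ := Finset.card_le_card hsub
  have : Fintype.card {j // lam j ≠ 0} = (Finset.univ.filter (fun j => lam j ≠ 0)).card :=
    Fintype.card_subtype _
  omega

/-- **Population MSE of the regularized estimator.** Let `A` be a real symmetric PSD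
`d × d` matrix with spectral decomposition `A = U * diagonal lam * Uᵀ` (`U` orthogonal,
`lam` nonincreasing and nonnegative), `rank A ≤ m ≤ d`, and `l > 0`. Then
`‖(A - l I)⁺₍ₘ₎ - A‖_F² = Σᵢ min(lam i, l)²`, where `(A - l I)⁺₍ₘ₎ =
U * diagonal ((lam₁ - l)⁺, …, (lam_m - l)⁺, 0, …, 0) * Uᵀ`. -/
theorem shrinkage_mse_psd_teacher
    (d m : ℕ) (hm : m ≤ d) (A : Matrix (Fin d) (Fin d) ℝ)
    (hA : A.IsSymm) (hApsd : A.PosSemidef)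
    (U : Matrix (Fin d) (Fin d) ℝ) (lam : Fin d → ℝ)
    (hU : Uᵀ * U = 1) (hlam : Antitone lam) (hlam0 : ∀ i, 0 ≤ lam i)
    (hAdec : A = U * Matrix.diagonal lam * Uᵀ)
    (hrank : A.rank ≤ m)
    (l : ℝ) (hl : 0 < l)
    (B : Matrix (Fin d) (Fin d) ℝ)
    (hB : B = U * Matrix.diagonal
      (fun i : Fin d => if (i : ℕ) < m then max (lam i - l) 0 else 0) * Uᵀ) :
    frobNorm (B - A) ^ 2 = ∑ i, min (lam i) l ^ 2 := by
  set μ : Fin d → ℝ := fun i => if (i : ℕ) < m then max (lam i - l) 0 else 0 with hμ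
  have htail : ∀ i : Fin d, m ≤ (i : ℕ) → lam i = 0 :=
    lam_tail_zero d m U lam hU hlam hlam0 (hAdec ▸ hrank)
  have hBA : B - A = U * Matrix.diagonal (fun i => μ i - lam i) * Uᵀ := by
    rw [hB, hAdec, ← Matrix.sub_mul, ← Matrix.mul_sub, Matrix.diagonal_sub]
  rw [hBA, frob_sq_conj d U hU]
  apply Finset.sum_congr rfl
  intro i _
  by_cases him : (i : ℕ) < m
  · simp only [hμ, if_pos him]
    rcases le_total (lam i) l with h | h
    · rw [max_eq_right (by linarith), min_eq_left h]; ring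
    · rw [max_eq_left (by linarith), min_eq_right h]; ring
  · have h0 : lam i = 0 := htail i (le_of_not_gt him)
    simp [hμ, if_neg him, h0, min_eq_left hl.le]
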